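/- Let ξ₁, ξ₂, … be i.i.d. with distribution F ∈ L_γ for some γ > 0 and φ_F(γ) < 1, and let M = sup_{n≥0} S_n where S_n are the partial sums. Then P(M > x) = o(e^{−γx}) as x → ∞. -/

import Mathlib

open MeasureTheory Filter Set

/-- The tail distribution function of a probability measure on ℝ. -/
noncomputable def tail (μ : Measure ℝ) (x : ℝ) : ℝ := (μ (Set.Ioi x)).toReal

/-- The exponential moment `φ_F(α) = ∫ e^{αx} dF(x)`, valued in `[0,∞]`. -/
noncomputable def expMoment (μ : Measure ℝ) (α : ℝ) : ENNReal :=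
  ∫⁻ x, ENNReal.ofReal (Real.exp (α * x)) ∂μ

/-- The class `L_γ`: positive tail, and `F̄(x-k)/F̄(x) → e^{γ k}` for every fixed `k`. -/
def MemL (μ : Measure ℝ) (γ : ℝ) : Prop :=
  (∀ x, 0 < tail μ x) ∧
  ∀ k : ℝ, Tendsto (fun x => tail μ (x - k) / tail μ x) atTop (nhds (Real.exp (γ * k)))

theorem max_tail_littleO_exp {Ω : Type*} [MeasurableSpace Ω]
    (ℙ : Measure Ω) [IsProbabilityMeasure ℙ]
    (μ : Measure ℝ) [IsProbabilityMeasure μ]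
    (ξ : ℕ → Ω → ℝ) (hmeas : ∀ i, Measurable (ξ i))
    (hindep : ProbabilityTheory.iIndepFun ξ ℙ)
    (hdist : ∀ i, Measure.map (ξ i) ℙ = μ)
    (S : ℕ → Ω → ℝ) (hS : ∀ n ω, S n ω = ∑ i ∈ Finset.range n, ξ i ω)
    (M : Ω → ℝ) (hM : ∀ ω, M ω = ⨆ n, S n ω)
    (γ : ℝ) (hγ : 0 < γ) (hL : MemL μ γ) (hφ : expMoment μ γ < 1) :
    (fun x => (ℙ {ω | x < M ω}).toReal) =o[atTop] fun x => Real.exp (-γ * x) := by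
  classical
  -- measurability of S and M
  have hSfun : ∀ n, S n = ∑ i ∈ Finset.range n, ξ i := by
    intro n; funext ω; rw [hS n ω]; simp
  have hSfun' : ∀ n, S n = fun ω => ∑ i ∈ Finset.range n, ξ i ω := by
    intro n; funext ω; exact hS n ω
  have hSmeas : ∀ n, Measurable (S n) := by
    intro n; rw [hSfun' n]; exact Finset.measurable_sum _ fun i _ => hmeas i
  have hMmeas : Measurable M := by
    have : M = fun ω => ⨆ n, S n ω := funext hM
    rw [this]; exact Measurable.iSup hSmeas
  -- integrability of exp(γ x) w.r.t. μ
  have hexp_nn : ∀ x : ℝ, (0:ℝ) ≤ Real.exp (γ * x) := fun x => (Real.exp_pos _).le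
  have hint : Integrable (fun x => Real.exp (γ * x)) μ := by
    refine ⟨(measurable_const_mul γ).exp.aestronglyMeasurable, ?_⟩
    rw [hasFiniteIntegral_iff_ofReal (Eventually.of_forall hexp_nn)]
    exact hφ.trans_le le_top
  set φr : ℝ := ∫ x, Real.exp (γ * x) ∂μ with hφr_def
  have hφr_eq : ENNReal.ofReal φr = expMoment μ γ :=
    ofReal_integral_eq_lintegral_ofReal hint (Eventually.of_forall hexp_nn)
  have hφr_lt : ENNReal.ofReal φr < 1 := hφr_eq ▸ hφ
  have hφr_nonneg : 0 ≤ φr := integral_nonneg hexp_nn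
  -- mgf of each ξ i equals φr
  have hint_ξ : ∀ i, Integrable (fun ω => Real.exp (γ * ξ i ω)) ℙ := by
    intro i
    have := hint
    rw [← hdist i] at this
    exact (integrable_map_measure ((measurable_const_mul γ).exp.aestronglyMeasurable)
      (hmeas i).aemeasurable).mp this
  have hmgf_ξ : ∀ i, ProbabilityTheory.mgf (ξ i) ℙ γ = φr := by
    intro i
    rw [ProbabilityTheory.mgf, hφr_def, ← hdist i,
      integral_map (hmeas i).aemeasurable ((measurable_const_mul γ).exp.aestronglyMeasurable)]
  -- mgf of S n equals φr ^ n
  have hmgf_S : ∀ n, ProbabilityTheory.mgf (S n) ℙ γ = φr ^ n := by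
    intro n
    rw [hSfun n, hindep.mgf_sum hmeas (Finset.range n)]
    simp [hmgf_ξ]
  have hint_S : ∀ n, Integrable (fun ω => Real.exp (γ * S n ω)) ℙ := by
    intro n
    have := hindep.integrable_exp_mul_sum (t := γ) hmeas
      (s := Finset.range n) (fun i _ => hint_ξ i)
    rw [← hSfun n] at this
    exact this
  have hlin_S : ∀ n, ∫⁻ ω, ENNReal.ofReal (Real.exp (γ * S n ω)) ∂ℙ
      = ENNReal.ofReal φr ^ n := by
    intro n
    rw [← ofReal_integral_eq_lintegral_ofReal (hint_S n) (Eventually.of_forall fun ω => hexp_nn _)]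
    have : ∫ ω, Real.exp (γ * S n ω) ∂ℙ = ProbabilityTheory.mgf (S n) ℙ γ := rfl
    rw [this, hmgf_S n, ENNReal.ofReal_pow hφr_nonneg]
  -- the dominating function G
  set G : Ω → ENNReal := fun ω => ∑' n, ENNReal.ofReal (Real.exp (γ * S n ω)) with hG_def
  have hGmeas : Measurable G := by
    apply Measurable.ennreal_tsum
    intro n
    exact ((hSmeas n).const_mul γ).exp.ennreal_ofReal
  have hG_int : ∫⁻ ω, G ω ∂ℙ ≠ ⊤ := by
    rw [hG_def]
    simp only
    rw [lintegral_tsum (fun n => (((hSmeas n).const_mul γ).exp.ennreal_ofReal).aemeasurable)]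
    simp_rw [hlin_S]
    rw [ENNReal.tsum_geometric]
    simp only [ne_eq, ENNReal.inv_eq_top]
    rw [tsub_eq_zero_iff_le]
    exact fun h => absurd hφr_lt (not_lt.mpr h)
  -- the finite measure ν
  set ν : Measure Ω := ℙ.withDensity G with hν_def
  have hν_fin : IsFiniteMeasure ν := isFiniteMeasure_withDensity hG_int
  -- a.e. pointwise bound
  have h_ae : ∀ᵐ ω ∂ℙ, ∀ x : ℝ, x < M ω → ENNReal.ofReal (Real.exp (γ * x)) ≤ G ω := by
    filter_upwards [ae_lt_top hGmeas hG_int] with ω hGω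
    intro x hx
    have hterm : ∀ n, ENNReal.ofReal (Real.exp (γ * S n ω)) ≤ G ω := fun n =>
      ENNReal.le_tsum n
    have hSle : ∀ n, S n ω ≤ Real.log (G ω).toReal / γ := by
      intro n
      have h1 : Real.exp (γ * S n ω) ≤ (G ω).toReal :=
        (ENNReal.ofReal_le_iff_le_toReal hGω.ne).mp (hterm n)
      have h2 : (0:ℝ) < (G ω).toReal := lt_of_lt_of_le (Real.exp_pos _) h1
      have h3 : γ * S n ω ≤ Real.log (G ω).toReal := (Real.le_log_iff_exp_le h2).mpr h1
      rw [le_div_iff₀ hγ]; linarith [h3]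
    have hbdd : BddAbove (Set.range fun n => S n ω) := by
      refine ⟨Real.log (G ω).toReal / γ, ?_⟩
      rintro y ⟨n, rfl⟩; exact hSle n
    rw [hM ω] at hx
    obtain ⟨n, hn⟩ := (lt_ciSup_iff hbdd).mp hx
    calc ENNReal.ofReal (Real.exp (γ * x))
        ≤ ENNReal.ofReal (Real.exp (γ * S n ω)) := by
          apply ENNReal.ofReal_le_ofReal
          exact Real.exp_le_exp.mpr (by nlinarith)
      _ ≤ G ω := hterm n
  -- the key bound
  have h_bound : ∀ x : ℝ, ENNReal.ofReal (Real.exp (γ * x)) * ℙ {ω | x < M ω}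
      ≤ ν {ω | x < M ω} := by
    intro x
    have hs : MeasurableSet {ω | x < M ω} := measurableSet_lt measurable_const hMmeas
    rw [hν_def, withDensity_apply _ hs]
    rw [← setLIntegral_const]
    apply setLIntegral_mono_ae (hGmeas.aemeasurable.restrict)
    filter_upwards [h_ae] with ω hω hmem
    exact hω x hmem
  -- tendsto of ν over integer levels
  have hν_nat : Tendsto (fun n : ℕ => ν {ω | (n:ℝ) < M ω}) atTop (nhds 0) := by
    have hiInter : ⋂ n : ℕ, {ω | (n:ℝ) < M ω} = ∅ := by
      ext ω
      simp only [Set.mem_iInter, Set.mem_setOf_eq, Set.mem_empty_iff_false, iff_false, not_forall,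
        not_lt]
      obtain ⟨n, hn⟩ := exists_nat_ge (M ω)
      exact ⟨n, hn⟩
    have := tendsto_measure_iInter_atTop (μ := ν)
      (fun n => (measurableSet_lt measurable_const hMmeas).nullMeasurableSet)
      (fun m n hmn => fun ω hω => by
        simp only [Set.mem_setOf_eq] at *
        exact lt_of_le_of_lt (by exact_mod_cast Nat.cast_le.mpr hmn) hω)
      ⟨0, measure_ne_top ν _⟩
    rw [hiInter] at this
    simpa [Function.comp_def] using this
  have hν_nat' : Tendsto (fun n : ℕ => (ν {ω | (n:ℝ) < M ω}).toReal) atTop (nhds 0) := by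
    have := (ENNReal.tendsto_toReal (by simp : (0:ENNReal) ≠ ⊤)).comp hν_nat
    simpa [Function.comp_def] using this
  -- pass to real levels
  have hν_real : Tendsto (fun x : ℝ => (ν {ω | x < M ω}).toReal) atTop (nhds 0) := by
    have hcomp : Tendsto (fun x : ℝ => (ν {ω | ((⌊x⌋₊ : ℕ):ℝ) < M ω}).toReal) atTop (nhds 0) :=
      hν_nat'.comp tendsto_nat_floor_atTop
    refine tendsto_of_tendsto_of_tendsto_of_le_of_le' tendsto_const_nhds hcomp ?_ ?_
    · exact Eventually.of_forall fun x => ENNReal.toReal_nonneg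
    · filter_upwards [eventually_ge_atTop (0:ℝ)] with x hx
      apply ENNReal.toReal_mono (measure_ne_top ν _)
      apply measure_mono
      intro ω hω
      simp only [Set.mem_setOf_eq] at *
      exact lt_of_le_of_lt (Nat.floor_le hx) hω
  -- conclude
  rw [Asymptotics.isLittleO_iff_tendsto (fun x hx => absurd hx (Real.exp_ne_zero _))]
  have heq : ∀ x : ℝ, (ℙ {ω | x < M ω}).toReal / Real.exp (-γ * x)
      = (ℙ {ω | x < M ω}).toReal * Real.exp (γ * x) := by
    intro x
    rw [div_eq_mul_inv, ← Real.exp_neg]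
    ring_nf
  simp_rw [heq]
  refine tendsto_of_tendsto_of_tendsto_of_le_of_le' tendsto_const_nhds hν_real ?_ ?_
  · exact Eventually.of_forall fun x =>
      mul_nonneg ENNReal.toReal_nonneg (Real.exp_pos _).le
  · refine Eventually.of_forall fun x => ?_
    have h := h_bound x
    have h' := ENNReal.toReal_mono (measure_ne_top ν _) h
    rw [ENNReal.toReal_mul, ENNReal.toReal_ofReal (hexp_nn x)] at h'
    linarith [h']
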